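/- Let Y be a finite connected simple graph. Then Y is bipartite if and only if κ(Y) is odd, where κ(Y) is the number of κ-equivalence classes of acyclic orientations of Y. -/

import Mathlib

/-- An orientation of a simple graph: a choice of direction for each edge. -/
structure GraphOrientation {V : Type*} (G : SimpleGraph V) where
  dir : V → V → Prop
  consistent : ∀ u v, G.Adj u v ↔ (dir u v ∨ dir v u)
  asymm : ∀ u v, dir u v → ¬ dir v u

/-- An orientation is acyclic if its directed graph has no directed cycle. -/
def GraphOrientation.IsAcyclic {V : Type*} {G : SimpleGraph V} (O : GraphOrientation G) : Prop :=
  ∀ v, ¬ Relation.TransGen O.dir v v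

/-- The type of acyclic orientations of `G`. -/
def AcycGraphOrientation {V : Type*} (G : SimpleGraph V) := {O : GraphOrientation G // O.IsAcyclic}

/-- `Click O O'` holds when `O'` is obtained from `O` by a source-to-sink operation:
reversing all edges incident to some source vertex `v`. -/
def Click {V : Type*} {G : SimpleGraph V} (O O' : GraphOrientation G) : Prop :=
  ∃ v, (∀ u, ¬ O.dir u v) ∧
    ∀ u w, O'.dir u w ↔ (((u = v ∨ w = v) ∧ O.dir w u) ∨ (u ≠ v ∧ w ≠ v ∧ O.dir u w))

/-- κ(G): the number of equivalence classes of acyclic orientations of `G` under the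
equivalence generated by source-to-sink operations. -/
noncomputable def kappa {V : Type*} (G : SimpleGraph V) : ℕ :=
  Nat.card (Quot (fun A B : AcycGraphOrientation G => Click A.1 B.1))

namespace KappaProof

open Relation SimpleGraph

attribute [local instance] Classical.propDecidable

variable {V : Type*} {G : SimpleGraph V}

lemma GraphOrientation.ext' {O O' : GraphOrientation G} (h : O.dir = O'.dir) : O = O' := by
  cases O; cases O'; simp_all

/-- reversal of an orientation -/
def rev (O : GraphOrientation G) : GraphOrientation G where
  dir u v := O.dir v u
  consistent u v := by
    show G.Adj u v ↔ O.dir v u ∨ O.dir u v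
    rw [G.adj_comm]; exact O.consistent v u
  asymm u v h h' := O.asymm v u h h'

lemma rev_rev (O : GraphOrientation G) : rev (rev O) = O := rfl

lemma rev_acyclic {O : GraphOrientation G} (h : O.IsAcyclic) : (rev O).IsAcyclic := by
  intro v hv
  exact h v (Relation.transGen_swap.mp hv)

/-- weight of a directed edge choice -/
noncomputable def wt (O : GraphOrientation G) (u v : V) : ℤ := if O.dir u v then 1 else -1

lemma wt_symm (O : GraphOrientation G) {u v : V} (h : G.Adj u v) : wt O v u = - wt O u v := by
  unfold wt
  rcases (O.consistent u v).mp h with h1 | h1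
  · simp [h1, O.asymm u v h1]
  · simp [h1, O.asymm v u h1]

/-- sum of edge weights along a walk -/
noncomputable def wsum (O : GraphOrientation G) : {u v : V} → G.Walk u v → ℤ
  | _, _, SimpleGraph.Walk.nil => 0
  | _, _, SimpleGraph.Walk.cons (u := a) (v := b) _ p => wt O a b + wsum O p

@[simp] lemma wsum_nil (O : GraphOrientation G) {u : V} : wsum O (.nil : G.Walk u u) = 0 := rfl

@[simp] lemma wsum_cons (O : GraphOrientation G) {u v w : V} (h : G.Adj u v) (p : G.Walk v w) :
    wsum O (.cons h p) = wt O u v + wsum O p := rfl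

lemma wsum_append (O : GraphOrientation G) {u v w : V} (p : G.Walk u v) (q : G.Walk v w) :
    wsum O (p.append q) = wsum O p + wsum O q := by
  induction p with
  | nil => simp
  | cons h p ih => simp [Walk.cons_append, ih]; ring

lemma wsum_reverse (O : GraphOrientation G) {u v : V} (p : G.Walk u v) :
    wsum O p.reverse = - wsum O p := by
  induction p with
  | nil => simp
  | cons h p ih =>
      rw [Walk.reverse_cons, wsum_append, ih]
      simp [wt_symm O h]

lemma wsum_rev (O : GraphOrientation G) {u v : V} (p : G.Walk u v) :
    wsum (rev O) p = - wsum O p := by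
  induction p with
  | nil => simp
  | cons h p ih =>
      rw [wsum_cons, wsum_cons, ih]
      have hw : ∀ a b : V, wt (rev O) a b = wt O b a := fun a b => rfl
      rw [hw, wt_symm O h]
      ring

end KappaProof

namespace KappaProof

open Relation SimpleGraph

attribute [local instance] Classical.propDecidable

variable {V : Type*} {G : SimpleGraph V}

/-! ### Click and walk sums -/

lemma wt_click {O O' : GraphOrientation G} {v : V}
    (hsrc : ∀ u, ¬ O.dir u v)
    (hform : ∀ u w, O'.dir u w ↔ (((u = v ∨ w = v) ∧ O.dir w u) ∨ (u ≠ v ∧ w ≠ v ∧ O.dir u w)))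
    {x y : V} (h : G.Adj x y) :
    wt O' x y = wt O x y + (if y = v then 2 else 0) - (if x = v then 2 else 0) := by
  have hxy : x ≠ y := G.ne_of_adj h
  by_cases hx : x = v
  · subst hx
    have hy : ¬ y = x := fun hy => hxy hy.symm
    have h1 : O.dir x y := by
      rcases (O.consistent x y).mp h with h1 | h1
      · exact h1
      · exact absurd h1 (hsrc y)
    have h2 : ¬ O'.dir x y := by
      rw [hform x y]
      push_neg
      exact ⟨fun _ => hsrc y, fun hc => absurd rfl hc⟩
    simp [wt, h1, h2, hy]
  · by_cases hy : y = v
    · subst hy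
      have h1 : ¬ O.dir x y := hsrc x
      have h2 : O.dir y x := by
        rcases (O.consistent x y).mp h with h' | h'
        · exact absurd h' h1
        · exact h'
      have h3 : O'.dir x y := by rw [hform x y]; exact Or.inl ⟨Or.inr rfl, h2⟩
      simp [wt, h1, h2, h3, hx]
    · have h1 : O'.dir x y ↔ O.dir x y := by
        rw [hform x y]
        constructor
        · rintro (⟨hc, _⟩ | ⟨_, _, hd⟩)
          · rcases hc with hc | hc
            · exact absurd hc hx
            · exact absurd hc hy
          · exact hd
        · intro hd
          exact Or.inr ⟨hx, hy, hd⟩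
      simp only [wt, h1, hx, hy, if_false]
      simp
lemma click_wsum {O O' : GraphOrientation G} {v : V}
    (hsrc : ∀ u, ¬ O.dir u v)
    (hform : ∀ u w, O'.dir u w ↔ (((u = v ∨ w = v) ∧ O.dir w u) ∨ (u ≠ v ∧ w ≠ v ∧ O.dir u w))) :
    ∀ {a b : V} (p : G.Walk a b),
      wsum O' p = wsum O p + (if b = v then 2 else 0) - (if a = v then 2 else 0) := by
  intro a b p
  induction p with
  | nil => simp
  | cons h p ih =>
      rw [wsum_cons, wsum_cons, ih, wt_click hsrc hform h]
      ring

lemma eqvgen_wsum {A B : AcycGraphOrientation G}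
    (h : EqvGen (fun A B : AcycGraphOrientation G => Click A.1 B.1) A B) :
    ∀ (a : V) (p : G.Walk a a), wsum A.1 p = wsum B.1 p := by
  induction h with
  | rel x y hxy =>
      intro a p
      obtain ⟨v, hsrc, hform⟩ := hxy
      rw [click_wsum hsrc hform p]
      ring
  | refl x => intro a p; rfl
  | symm x y _ ih => intro a p; exact (ih a p).symm
  | trans x y z _ _ ih1 ih2 => intro a p; exact (ih1 a p).trans (ih2 a p)

lemma wsum_length_even (O : GraphOrientation G) :
    ∀ {u v : V} (p : G.Walk u v), Even (wsum O p + (p.length : ℤ)) := by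
  intro u v p
  induction p with
  | nil => simp
  | cons h p ih =>
      obtain ⟨k, hk⟩ := ih
      rw [wsum_cons, Walk.length_cons]
      unfold wt
      split
      · exact ⟨k + 1, by push_cast; omega⟩
      · exact ⟨k, by push_cast; omega⟩

/-! ### Graded orientations -/

def Good (G : SimpleGraph V) (f : V → ℤ) : Prop :=
  ∀ u v, G.Adj u v → f v = f u + 1 ∨ f u = f v + 1

def Ofp (G : SimpleGraph V) (f : V → ℤ) (hf : Good G f) : GraphOrientation G where
  dir u v := G.Adj u v ∧ f v = f u + 1
  consistent u v := by
    constructor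
    · intro h
      rcases hf u v h with h1 | h1
      · exact Or.inl ⟨h, h1⟩
      · exact Or.inr ⟨h.symm, h1⟩
    · rintro (⟨h, _⟩ | ⟨h, _⟩)
      · exact h
      · exact h.symm
  asymm u v := by
    rintro ⟨_, h1⟩ ⟨_, h2⟩
    omega

lemma acyclic_of_graded {O : GraphOrientation G} (f : V → ℤ)
    (hg : ∀ u v, O.dir u v → f v = f u + 1) : O.IsAcyclic := by
  intro v hv
  have key : ∀ a b : V, Relation.TransGen O.dir a b → f a < f b := by
    intro a b h
    induction h with
    | single h => have := hg _ _ h; omega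
    | tail _ h ih => have := hg _ _ h; omega
  exact absurd (key v v hv) (lt_irrefl _)

def Afp (G : SimpleGraph V) (f : V → ℤ) (hf : Good G f) : AcycGraphOrientation G :=
  ⟨Ofp G f hf, acyclic_of_graded f (fun _ _ h => h.2)⟩

lemma Afp_eq_of {f g : V → ℤ} {hf : Good G f} {hg : Good G g}
    (h : ∀ u v, G.Adj u v → (f v = f u + 1 ↔ g v = g u + 1)) :
    Afp G f hf = Afp G g hg := by
  apply Subtype.ext
  apply GraphOrientation.ext'
  funext u v
  apply propext
  constructor
  · rintro ⟨ha, he⟩; exact ⟨ha, (h u v ha).mp he⟩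
  · rintro ⟨ha, he⟩; exact ⟨ha, (h u v ha).mpr he⟩

lemma clickStep (f : V → ℤ) (hf : Good G f) (v : V) (hv : ∀ y, G.Adj v y → f y = f v + 1)
    (hf' : Good G (fun x => f x + if x = v then 2 else 0)) :
    Click (Ofp G f hf) (Ofp G (fun x => f x + if x = v then 2 else 0) hf') := by
  have hdir : ∀ a b, (Ofp G f hf).dir a b ↔ (G.Adj a b ∧ f b = f a + 1) :=
    fun _ _ => Iff.rfl
  have hdir' : ∀ a b, (Ofp G (fun x => f x + if x = v then 2 else 0) hf').dir a b ↔
      (G.Adj a b ∧ (f b + if b = v then 2 else 0) = (f a + if a = v then 2 else 0) + 1) :=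
    fun _ _ => Iff.rfl
  refine ⟨v, ?_, ?_⟩
  · intro u h
    rw [hdir] at h
    obtain ⟨hadj, he⟩ := h
    have := hv u hadj.symm
    omega
  · intro u w
    simp only [hdir, hdir']
    by_cases hu : u = v <;> by_cases hw : w = v
    · constructor
      · rintro ⟨hadj, _⟩
        exact absurd (hu.trans hw.symm) (G.ne_of_adj hadj)
      · rintro (⟨_, hadj, _⟩ | ⟨hne, _, _⟩)
        · exact absurd (hw.trans hu.symm) (G.ne_of_adj hadj)
        · exact absurd hu hne
    · have hfu : f u = f v := by rw [hu]
      constructor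
      · rintro ⟨hadj, he⟩
        have h1 := hv w (hu ▸ hadj)
        rw [if_pos hu, if_neg hw] at he
        omega
      · rintro (⟨_, hadj, he⟩ | ⟨hne, _, _⟩)
        · have h1 := hv w (hu ▸ hadj.symm)
          omega
        · exact absurd hu hne
    · have hfw : f w = f v := by rw [hw]
      constructor
      · rintro ⟨hadj, _⟩
        have h1 := hv u (hw ▸ hadj.symm)
        exact Or.inl ⟨Or.inr hw, hadj.symm, by omega⟩
      · rintro (⟨_, hadj, he⟩ | ⟨_, hne, _⟩)
        · refine ⟨hadj.symm, ?_⟩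
          rw [if_pos hw, if_neg hu]
          omega
        · exact absurd hw hne
    · constructor
      · rintro ⟨hadj, he⟩
        rw [if_neg hu, if_neg hw] at he
        exact Or.inr ⟨hu, hw, hadj, by omega⟩
      · rintro (⟨hor, _⟩ | ⟨_, _, hadj, he⟩)
        · rcases hor with h | h
          · exact absurd h hu
          · exact absurd h hw
        · exact ⟨hadj, by rw [if_neg hu, if_neg hw]; omega⟩

end KappaProof

namespace KappaProof

open Relation SimpleGraph

attribute [local instance] Classical.propDecidable

variable {V : Type*} {G : SimpleGraph V}

/-- The relation on acyclic orientations. -/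
abbrev rA (G : SimpleGraph V) : AcycGraphOrientation G → AcycGraphOrientation G → Prop :=
  fun A B => Click A.1 B.1

lemma good_shift (f : V → ℤ) (hf : Good G f) (a : ℤ) (hbd : ∀ x, a ≤ f x)
    (T : Finset V) (hT : ∀ x ∈ T, f x = a) :
    Good G (fun x => f x + if x ∈ T then 2 else 0) := by
  intro u v h
  have h0 := hf u v h
  have h1 := hbd u
  have h2 := hbd v
  by_cases hu : u ∈ T <;> by_cases hv : v ∈ T <;>
    simp only [if_pos, if_neg, hu, hv, if_true, if_false]
  · have := hT u hu; have := hT v hv; omega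
  · have := hT u hu; omega
  · have := hT v hv; omega
  · omega

lemma round (f : V → ℤ) (hf : Good G f) (a : ℤ) (hbd : ∀ x, a ≤ f x) :
    ∀ (T : Finset V), (∀ x ∈ T, f x = a) →
      ∀ (hg : Good G (fun x => f x + if x ∈ T then 2 else 0)),
      EqvGen (rA G) (Afp G f hf) (Afp G (fun x => f x + if x ∈ T then 2 else 0) hg) := by
  intro T
  induction T using Finset.induction_on with
  | empty =>
      intro _ hg
      have : Afp G (fun x => f x + if x ∈ (∅ : Finset V) then 2 else 0) hg = Afp G f hf :=
        Afp_eq_of (fun u v _ => by simp)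
      rw [this]
      exact EqvGen.refl _
  | @insert z s hz ih =>
      intro hT hg
      have hTs : ∀ x ∈ s, f x = a := fun x hx => hT x (Finset.mem_insert_of_mem hx)
      have hgs : Good G (fun x => f x + if x ∈ s then 2 else 0) := good_shift f hf a hbd s hTs
      have hne : ∀ y, G.Adj z y → f y = a + 1 ∧ y ∉ s ∧ y ≠ z := by
        intro y hy
        have h0 := hf z y hy
        have h1 := hbd y
        have hz' := hT z (Finset.mem_insert_self z s)
        have hfy : f y = a + 1 := by omega
        refine ⟨hfy, fun hys => by have := hTs y hys; omega, fun hyz => ?_⟩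
        rw [hyz] at hfy; omega
      -- click at z starting from the s-shifted potential
      have hvz : ∀ y, G.Adj z y →
          (f y + if y ∈ s then 2 else 0) = (f z + if z ∈ s then 2 else 0) + 1 := by
        intro y hy
        obtain ⟨h1, h2, _⟩ := hne y hy
        rw [if_neg h2, if_neg hz]
        have := hT z (Finset.mem_insert_self z s)
        omega
      have hgs' : Good G (fun x => (f x + if x ∈ s then 2 else 0) + if x = z then 2 else 0) := by
        intro u v h
        have h0 : (f v + if v ∈ s then 2 else 0) = (f u + if u ∈ s then 2 else 0) + 1 ∨
            (f u + if u ∈ s then 2 else 0) = (f v + if v ∈ s then 2 else 0) + 1 := hgs u v h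
        by_cases hu : u = z <;> by_cases hv : v = z <;>
          simp only [if_pos, if_neg, hu, hv, if_true, if_false]
        · have := G.ne_of_adj h; rw [hu, hv] at this; exact absurd rfl this
        · have := hvz v (hu ▸ h); rw [hu] at h0; omega
        · have := hvz u (hv ▸ h.symm); rw [hv] at h0; omega
        · omega
      have hstep : rA G (Afp G (fun x => f x + if x ∈ s then 2 else 0) hgs)
          (Afp G (fun x => (f x + if x ∈ s then 2 else 0) + if x = z then 2 else 0) hgs') :=
        clickStep _ hgs z hvz hgs'
      have heq : Afp G (fun x => (f x + if x ∈ s then 2 else 0) + if x = z then 2 else 0) hgs'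
          = Afp G (fun x => f x + if x ∈ insert z s then 2 else 0) hg := by
        apply Afp_eq_of
        intro u v _
        have key : ∀ x : V, (f x + if x ∈ s then 2 else 0) + (if x = z then 2 else 0)
            = f x + if x ∈ insert z s then 2 else 0 := by
          intro x
          by_cases hx : x = z
          · subst hx; simp [hz]
          · by_cases hxs : x ∈ s <;> simp [hx, hxs, Finset.mem_insert]
        rw [key u, key v]
      exact EqvGen.trans _ _ _ (ih hTs hgs) (heq ▸ EqvGen.rel _ _ hstep)

end KappaProof

namespace KappaProof

open Relation SimpleGraph

attribute [local instance] Classical.propDecidable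

variable {V : Type*} {G : SimpleGraph V}

lemma conn_const (hconn : G.Connected) (P : V → Prop)
    (hP : ∀ u v, G.Adj u v → (P u ↔ P v)) (u v : V) : P u ↔ P v := by
  have key : ∀ {x y : V}, G.Walk x y → (P x ↔ P y) := by
    intro x y p
    induction p with
    | nil => exact Iff.rfl
    | cons h _ ih => exact (hP _ _ h).trans ih
  exact key (hconn.preconnected u v).some

/-- the potential associated to a 2-coloring -/
def fCol (c : V → Fin 2) : V → ℤ := fun x => if c x = 0 then 0 else 1

lemma good_fCol (c : V → Fin 2) (hc : ∀ u v, G.Adj u v → c u ≠ c v) : Good G (fCol c) := by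
  intro u v h
  have h2 : ∀ z : Fin 2, z = 0 ∨ z = 1 := by decide
  have := hc u v h
  unfold fCol
  rcases h2 (c u) with h3 | h3 <;> rcases h2 (c v) with h4 | h4 <;>
    simp [h3, h4] at this ⊢

lemma main_base [Fintype V] (hconn : G.Connected) (c : V → Fin 2) (hc : ∀ u v, G.Adj u v → c u ≠ c v)
    (hgc : Good G (fCol c)) (f : V → ℤ) (hf : Good G f) (a : ℤ)
    (hbd : ∀ x, f x = a ∨ f x = a + 1) :
    EqvGen (rA G) (Afp G f hf) (Afp G (fCol c) hgc) := by
  have h2 : ∀ z : Fin 2, z = 0 ∨ z = 1 := by decide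
  have hcval : ∀ x, fCol c x = 0 ∨ fCol c x = 1 := by
    intro x; unfold fCol; rcases h2 (c x) with h | h <;> simp [h]
  -- the two potentials agree or are opposite, by connectivity
  have hdich : (∀ x, f x = a + fCol c x) ∨ (∀ x, f x = a + 1 - fCol c x) := by
    have hadjP : ∀ u v, G.Adj u v → ((f u = a + fCol c u) ↔ (f v = a + fCol c v)) := by
      intro u v h
      have h0 := hf u v h
      have h1 : fCol c u ≠ fCol c v := by
        have := hc u v h
        unfold fCol
        rcases h2 (c u) with h3 | h3 <;> rcases h2 (c v) with h4 | h4 <;>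
          simp [h3, h4] at this ⊢
      have hu := hbd u; have hv := hbd v
      have hcu := hcval u; have hcv := hcval v
      constructor <;> intro <;> omega
    obtain ⟨b⟩ := hconn.nonempty
    by_cases hPb : f b = a + fCol c b
    · left
      intro x
      exact (conn_const hconn _ hadjP x b).mpr hPb
    · right
      intro x
      have hx : ¬ (f x = a + fCol c x) := fun hx => hPb ((conn_const hconn _ hadjP x b).mp hx)
      have := hbd x; have := hcval x
      omega
  rcases hdich with hcase | hcase
  · have : Afp G f hf = Afp G (fCol c) hgc := by
      apply Afp_eq_of
      intro u v _
      rw [hcase u, hcase v]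
      constructor <;> intro <;> omega
    rw [this]; exact EqvGen.refl _
  · -- one more round of clicking the bottom level
    have hbd' : ∀ x, a ≤ f x := by intro x; rcases hbd x with h | h <;> omega
    set T : Finset V := Finset.univ.filter (fun x => f x = a) with hTdef
    have hT : ∀ x ∈ T, f x = a := by
      intro x hx; rw [hTdef] at hx; simpa using hx
    have hg : Good G (fun x => f x + if x ∈ T then 2 else 0) :=
      good_shift f hf a hbd' T hT
    have h1 := round f hf a hbd' T hT hg
    have : Afp G (fun x => f x + if x ∈ T then 2 else 0) hg = Afp G (fCol c) hgc := by
      apply Afp_eq_of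
      intro u v _
      have key : ∀ x, (f x + if x ∈ T then 2 else 0) = a + 1 + fCol c x := by
        intro x
        have hx1 := hcase x
        have hx2 := hcval x
        by_cases hx : x ∈ T
        · have := hT x hx; rw [if_pos hx]; omega
        · have : ¬ f x = a := by
            intro hfx
            exact hx (by rw [hTdef]; simp [hfx])
          rw [if_neg hx]; omega
      rw [key u, key v]
      constructor <;> intro <;> omega
    rw [← this]
    exact h1

lemma main_ind [Fintype V] (hconn : G.Connected) (c : V → Fin 2) (hc : ∀ u v, G.Adj u v → c u ≠ c v)
    (hgc : Good G (fCol c)) :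
    ∀ (n : ℕ) (f : V → ℤ) (hf : Good G f) (a b : ℤ),
      (∀ x, a ≤ f x ∧ f x ≤ b) → b - a ≤ n →
      EqvGen (rA G) (Afp G f hf) (Afp G (fCol c) hgc) := by
  intro n
  induction n with
  | zero =>
      intro f hf a b hbd hn
      exact main_base hconn c hc hgc f hf a
        (fun x => by have := hbd x; left; omega)
  | succ n ih =>
      intro f hf a b hbd hn
      by_cases hs : b - a ≤ 1
      · exact main_base hconn c hc hgc f hf a
          (fun x => by have := hbd x; omega)
      · have hbd' : ∀ x, a ≤ f x := fun x => (hbd x).1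
        set T : Finset V := Finset.univ.filter (fun x => f x = a) with hTdef
        have hT : ∀ x ∈ T, f x = a := by
          intro x hx; rw [hTdef] at hx; simpa using hx
        have hg : Good G (fun x => f x + if x ∈ T then 2 else 0) :=
          good_shift f hf a hbd' T hT
        have h1 := round f hf a hbd' T hT hg
        refine EqvGen.trans _ _ _ h1 (ih _ hg (a + 1) b ?_ (by omega))
        intro x
        by_cases hx : x ∈ T
        · have := hT x hx; rw [if_pos hx]; omega
        · have hne : ¬ f x = a := by
            intro hfx; exact hx (by rw [hTdef]; simp [hfx])
          have := hbd x
          rw [if_neg hx]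
          omega

lemma main [Fintype V] (hconn : G.Connected) (c : V → Fin 2)
    (hc : ∀ u v, G.Adj u v → c u ≠ c v) (hgc : Good G (fCol c))
    (f : V → ℤ) (hf : Good G f) :
    EqvGen (rA G) (Afp G f hf) (Afp G (fCol c) hgc) := by
  have hne : (Finset.univ.image f).Nonempty := by
    obtain ⟨b⟩ := hconn.nonempty
    exact ⟨f b, Finset.mem_image_of_mem f (Finset.mem_univ b)⟩
  set a := (Finset.univ.image f).min' hne
  set b := (Finset.univ.image f).max' hne
  refine main_ind hconn c hc hgc (b - a).toNat f hf a b ?_ (Int.self_le_toNat _)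
  intro x
  constructor
  · exact Finset.min'_le _ _ (Finset.mem_image_of_mem f (Finset.mem_univ x))
  · exact Finset.le_max' _ _ (Finset.mem_image_of_mem f (Finset.mem_univ x))

end KappaProof

namespace KappaProof

open Relation SimpleGraph

attribute [local instance] Classical.propDecidable

variable {V : Type*} {G : SimpleGraph V}

lemma graded_of_zero (hconn : G.Connected) {O : GraphOrientation G}
    (h0 : ∀ (a : V) (p : G.Walk a a), wsum O p = 0) :
    ∃ f : V → ℤ, ∀ u v, O.dir u v → f v = f u + 1 := by
  obtain ⟨b⟩ := hconn.nonempty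
  refine ⟨fun x => wsum O (hconn.preconnected b x).some, ?_⟩
  intro u v hd
  have hadj : G.Adj u v := (O.consistent u v).mpr (Or.inl hd)
  have key := h0 b
    (((hconn.preconnected b u).some.append (Walk.cons hadj Walk.nil)).append
      (hconn.preconnected b v).some.reverse)
  rw [wsum_append, wsum_append, wsum_reverse, wsum_cons, wsum_nil] at key
  have hwt : wt O u v = 1 := by unfold wt; simp [hd]
  rw [hwt] at key
  show wsum O (hconn.preconnected b v).some = wsum O (hconn.preconnected b u).some + 1
  omega

lemma click_rev {O O' : GraphOrientation G} (h : Click O O') : Click (rev O') (rev O) := by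
  obtain ⟨v, hsrc, hform⟩ := h
  refine ⟨v, ?_, ?_⟩
  · intro u hd
    have hd' : O'.dir v u := hd
    rw [hform v u] at hd'
    rcases hd' with ⟨_, hd2⟩ | ⟨hne, _, _⟩
    · exact hsrc u hd2
    · exact hne rfl
  · intro u w
    show O.dir w u ↔ ((u = v ∨ w = v) ∧ O'.dir u w) ∨ (u ≠ v ∧ w ≠ v ∧ O'.dir w u)
    rw [hform u w, hform w u]
    by_cases hu : u = v <;> by_cases hw : w = v <;>
      simp only [hu, hw] <;> tauto
  
/-- reversal on acyclic orientations -/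
def revA (A : AcycGraphOrientation G) : AcycGraphOrientation G :=
  ⟨rev A.1, rev_acyclic A.2⟩

lemma revA_revA (A : AcycGraphOrientation G) : revA (revA A) = A := Subtype.ext rfl

lemma finite_GO [Finite V] : Finite (GraphOrientation G) :=
  Finite.of_injective (fun O => O.dir) (fun _ _ h => GraphOrientation.ext' h)

lemma finite_A [Finite V] : Finite (AcycGraphOrientation G) := by
  have := finite_GO (G := G)
  exact Finite.of_injective (fun A : AcycGraphOrientation G => A.1) Subtype.val_injective

lemma finite_Q [Finite V] : Finite (Quot (rA G)) := by
  have := finite_A (G := G)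
  exact Finite.of_surjective (Quot.mk (rA G)) (fun q => q.exists_rep)

/-- parity of the cardinality of a finite type with an involution -/
lemma even_card_invol_aux {X : Type*} (σ : X → X) :
    ∀ (n : ℕ) (s : Finset X), s.card ≤ n → (∀ x ∈ s, σ x ∈ s) →
      (∀ x ∈ s, σ (σ x) = x) → (∀ x ∈ s, σ x ≠ x) → Even s.card := by
  intro n
  induction n with
  | zero =>
      intro s hcard _ _ _
      rw [Nat.le_zero] at hcard
      rw [hcard]
      exact ⟨0, rfl⟩
  | succ n ih =>
      intro s hcard h1 h2 h3
      rcases s.eq_empty_or_nonempty with rfl | ⟨x, hx⟩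
      · simp
      · set t := s \ {x, σ x} with htdef
        have hσx : σ x ∈ s := h1 x hx
        have hne : σ x ≠ x := h3 x hx
        have hsub : ({x, σ x} : Finset X) ⊆ s := by
          intro y hy
          rcases Finset.mem_insert.mp hy with rfl | hy
          · exact hx
          · rw [Finset.mem_singleton.mp hy]; exact hσx
        have hpair : ({x, σ x} : Finset X).card = 2 := by
          rw [Finset.card_insert_of_notMem (by simpa using hne.symm), Finset.card_singleton]
        have hcardt : t.card + 2 = s.card := by
          rw [htdef, Finset.card_sdiff_of_subset hsub, hpair]
          have := Finset.card_le_card hsub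
          omega
        have htmem : ∀ y ∈ t, y ∈ s ∧ y ≠ x ∧ y ≠ σ x := by
          intro y hy
          rw [htdef, Finset.mem_sdiff] at hy
          refine ⟨hy.1, ?_, ?_⟩
          · intro hyx; exact hy.2 (by simp [hyx])
          · intro hyx; exact hy.2 (by simp [hyx])
        have ht1 : ∀ y ∈ t, σ y ∈ t := by
          intro y hy
          obtain ⟨hys, hyx, hyσx⟩ := htmem y hy
          rw [htdef, Finset.mem_sdiff]
          refine ⟨h1 y hys, ?_⟩
          simp only [Finset.mem_insert, Finset.mem_singleton]
          push_neg
          constructor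
          · intro hc
            exact hyσx (by rw [← h2 y hys, hc])
          · intro hc
            have := congrArg σ hc
            rw [h2 y hys, h2 x hx] at this
            exact hyx this
        have := ih t (by omega) ht1 (fun y hy => h2 y (htmem y hy).1)
          (fun y hy => h3 y (htmem y hy).1)
        obtain ⟨k, hk⟩ := this
        exact ⟨k + 1, by omega⟩

lemma card_modEq_fixed {X : Type*} [Finite X] (σ : X → X) (hσ : ∀ x, σ (σ x) = x) :
    Nat.card X ≡ Nat.card {x : X // σ x = x} [MOD 2] := by
  have : Fintype X := Fintype.ofFinite X
  rw [Nat.card_eq_fintype_card, Nat.card_eq_fintype_card, Fintype.card_subtype]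
  have hsplit := Finset.card_filter_add_card_filter_not
    (s := (Finset.univ : Finset X)) (p := fun x => σ x = x)
  have heven : Even ((Finset.univ : Finset X).filter (fun x => ¬ σ x = x)).card := by
    apply even_card_invol_aux σ (((Finset.univ : Finset X).filter (fun x => ¬ σ x = x)).card) _ le_rfl
    · intro x hx
      simp only [Finset.mem_filter, Finset.mem_univ, true_and] at hx ⊢
      intro hc
      exact hx (by rw [← hσ x, hc, hc])
    · intro x _; exact hσ x
    · intro x hx
      simpa using hx
  obtain ⟨k, hk⟩ := heven
  rw [Finset.card_univ] at hsplit
  unfold Nat.ModEq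
  omega

lemma colorable_of_even_closed (hconn : G.Connected)
    (h : ∀ (a : V) (p : G.Walk a a), Even p.length) : G.Colorable 2 := by
  obtain ⟨b⟩ := hconn.nonempty
  refine ⟨Coloring.mk
    (fun x => if Even ((hconn.preconnected b x).some.length) then 0 else 1) ?_⟩
  intro u v hadj hcc
  have hcl := h b
    ((hconn.preconnected b u).some.append (Walk.cons hadj (hconn.preconnected b v).some.reverse))
  rw [Walk.length_append, Walk.length_cons, Walk.length_reverse] at hcl
  rw [Nat.even_iff] at hcl
  beta_reduce at hcc
  by_cases h1 : Even (hconn.preconnected b u).some.length <;>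
    by_cases h2 : Even (hconn.preconnected b v).some.length
  · rw [Nat.even_iff] at h1 h2; omega
  · rw [if_pos h1, if_neg h2] at hcc; exact absurd hcc (by decide)
  · rw [if_neg h1, if_pos h2] at hcc; exact absurd hcc (by decide)
  · rw [Nat.not_even_iff] at h1 h2; omega
  
end KappaProof


open Relation KappaProof

theorem bipartite_iff_kappa_odd {V : Type*} [Fintype V] (G : SimpleGraph V)
    (hconn : G.Connected) : G.Colorable 2 ↔ Odd (kappa G) := by
  classical
  have hfinQ : Finite (Quot (rA G)) := finite_Q
  let σ : Quot (rA G) → Quot (rA G) :=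
    Quot.lift (fun A => Quot.mk (rA G) (revA A))
      (fun A B hAB => (Quot.sound (r := rA G) (a := revA B) (b := revA A) (click_rev hAB)).symm)
  have hσmk : ∀ A, σ (Quot.mk (rA G) A) = Quot.mk (rA G) (revA A) := fun A => rfl
  have hσ : ∀ q, σ (σ q) = q := by
    intro q
    obtain ⟨A, rfl⟩ := q.exists_rep
    rw [hσmk, revA_revA]
  have hmod : Nat.card (Quot (rA G)) ≡ Nat.card {q : Quot (rA G) // σ q = q} [MOD 2] :=
    card_modEq_fixed σ hσ
  have hkappa : kappa G = Nat.card (Quot (rA G)) := rfl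
  have hfix_zero : ∀ (A : AcycGraphOrientation G), σ (Quot.mk (rA G) A) = Quot.mk (rA G) A →
      ∀ (a : V) (p : G.Walk a a), wsum A.1 p = 0 := by
    intro A hA a p
    rw [hσmk] at hA
    have hEq : EqvGen (rA G) (revA A) A := Quot.eqvGen_exact hA
    have h1 : wsum (rev A.1) p = wsum A.1 p := eqvgen_wsum hEq a p
    have h2 : wsum (rev A.1) p = - wsum A.1 p := wsum_rev A.1 p
    omega
  constructor
  · rintro ⟨c⟩
    set c' : V → Fin 2 := fun x => c x with hc'
    have hc : ∀ u v, G.Adj u v → c' u ≠ c' v := fun u v h => c.valid h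
    have hgc : Good G (fCol c') := good_fCol c' hc
    have hgneg : Good G (fun x => - fCol c' x) := by
      intro u v h
      show - fCol c' v = - fCol c' u + 1 ∨ - fCol c' u = - fCol c' v + 1
      rcases hgc u v h with h1 | h1
      · right; omega
      · left; omega
    have hrev : revA (Afp G (fCol c') hgc) = Afp G (fun x => - fCol c' x) hgneg := by
      apply Subtype.ext
      apply GraphOrientation.ext'
      funext u v
      apply propext
      show (G.Adj v u ∧ fCol c' u = fCol c' v + 1) ↔ (G.Adj u v ∧ - fCol c' v = - fCol c' u + 1)
      constructor
      · rintro ⟨h1, h2⟩; exact ⟨h1.symm, by omega⟩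
      · rintro ⟨h1, h2⟩; exact ⟨h1.symm, by omega⟩
    have hfixc : σ (Quot.mk (rA G) (Afp G (fCol c') hgc)) = Quot.mk (rA G) (Afp G (fCol c') hgc) := by
      rw [hσmk, hrev]
      exact Quot.eqvGen_sound (main hconn c' hc hgc _ hgneg)
    have huniq : ∀ q : Quot (rA G), σ q = q → q = Quot.mk (rA G) (Afp G (fCol c') hgc) := by
      intro q hq
      obtain ⟨A, rfl⟩ := q.exists_rep
      have h0 := hfix_zero A hq
      obtain ⟨f, hfgr⟩ := graded_of_zero hconn h0
      have hfgood : Good G f := by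
        intro u v h
        rcases (A.1.consistent u v).mp h with h1 | h1
        · exact Or.inl (hfgr _ _ h1)
        · exact Or.inr (hfgr _ _ h1)
      have hAeq : A = Afp G f hfgood := by
        apply Subtype.ext
        apply GraphOrientation.ext'
        funext u v
        apply propext
        show A.1.dir u v ↔ (G.Adj u v ∧ f v = f u + 1)
        constructor
        · intro hd
          exact ⟨(A.1.consistent u v).mpr (Or.inl hd), hfgr _ _ hd⟩
        · rintro ⟨hadj, he⟩
          rcases (A.1.consistent u v).mp hadj with h1 | h1
          · exact h1
          · have := hfgr _ _ h1; omega
      rw [hAeq]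
      exact Quot.eqvGen_sound (main hconn c' hc hgc f hfgood)
    have hcard1 : Nat.card {q : Quot (rA G) // σ q = q} = 1 := by
      rw [Nat.card_eq_one_iff_unique]
      refine ⟨⟨?_⟩, ⟨⟨Quot.mk (rA G) (Afp G (fCol c') hgc), hfixc⟩⟩⟩
      intro x y
      apply Subtype.ext
      rw [huniq x.1 x.2, huniq y.1 y.2]
    rw [Nat.odd_iff, hkappa]
    have := hmod
    rw [hcard1] at this
    unfold Nat.ModEq at this
    omega
  · intro hodd
    by_contra hncol
    have hnofix : ∀ q : Quot (rA G), σ q ≠ q := by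
      intro q hq
      obtain ⟨A, rfl⟩ := q.exists_rep
      have h0 := hfix_zero A hq
      apply hncol
      apply colorable_of_even_closed hconn
      intro a p
      have h1 := wsum_length_even A.1 p
      rw [h0 a p] at h1
      exact (Int.even_coe_nat _).mp (by simpa using h1)
    have hzero : Nat.card {q : Quot (rA G) // σ q = q} = 0 := by
      rw [Nat.card_eq_zero]
      left
      exact ⟨fun x => absurd x.2 (hnofix x.1)⟩
    rw [Nat.odd_iff, hkappa] at hodd
    rw [hzero] at hmod
    unfold Nat.ModEq at hmod
    omega
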